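/- Let G be a nilpotent group of class two, minimally generated by elements x₁, …, x_m of orders 2^(r₁) ≤ ⋯ ≤ 2^(r_m) respectively, with all r_i ≥ 1, and assume that m > 1 and r_m = r_(m-1) + 1. If G is capable, then at least one of the commutators [x_m, x_i] with i ∈ {1, …, m-1} has order exactly 2^(r_(m-1)). -/

import Mathlib

universe u

open scoped commutatorElement

/-- The paper's commutator convention: `[x,y] = x⁻¹y⁻¹xy`. -/
def pcomm {G : Type*} [Group G] (x y : G) : G := x⁻¹ * y⁻¹ * x * y

/-- A group is capable if it is isomorphic to `K/Z(K)` for some group `K`. -/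
def IsCapable (G : Type u) [Group G] : Prop :=
  ∃ (K : Type u) (_ : Group K), Nonempty ((K ⧸ Subgroup.center K) ≃* G)

lemma comm_mul_left' {K : Type*} [Group K] (g h k : K) :
    ⁅g * h, k⁆ = g * ⁅h, k⁆ * g⁻¹ * ⁅g, k⁆ := by
  simp only [commutatorElement_def]; group

lemma center_commute' {K : Type*} [Group K] {c : K} (h : c ∈ Subgroup.center K) (w : K) :
    Commute c w :=
  ((Subgroup.mem_center_iff.mp h) w).symm

lemma comm_pow_left' {K : Type*} [Group K] (a b : K)
    (hc : ∀ w : K, Commute ⁅⁅a, b⁆, a⁆ w) (n : ℕ) :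
    ⁅a ^ n, b⁆ = (⁅⁅a, b⁆, a⁆)⁻¹ ^ n.choose 2 * ⁅a, b⁆ ^ n := by
  set u := ⁅a, b⁆ with hu
  set c := ⁅u, a⁆ with hcdef
  have hconj : a * u * a⁻¹ = c⁻¹ * u := by
    rw [hcdef, hu]; simp only [commutatorElement_def]; group; rw [zpow_two]
  induction n with
  | zero => simp
  | succ n ih =>
    have key : ⁅a ^ (n + 1), b⁆ = a * ⁅a ^ n, b⁆ * a⁻¹ * u := by
      rw [pow_succ']; exact comm_mul_left' a (a ^ n) b
    have hch : (n + 1).choose 2 = n.choose 2 + n := by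
      rw [Nat.choose_succ_succ]; simp [Nat.choose_one_right, Nat.add_comm]
    have e1 : a * u ^ n * a⁻¹ = c⁻¹ ^ n * u ^ n := by
      rw [← conj_pow, hconj, ((hc u).inv_left).mul_pow]
    have hak : a * c⁻¹ ^ n.choose 2 = c⁻¹ ^ n.choose 2 * a :=
      (((hc a).inv_left).pow_left _).eq.symm
    rw [key, ih, hch, pow_add, pow_succ]
    rw [← mul_assoc a (c⁻¹ ^ n.choose 2) (u ^ n), hak,
      mul_assoc (c⁻¹ ^ n.choose 2) a (u ^ n),
      mul_assoc (c⁻¹ ^ n.choose 2) (a * u ^ n) a⁻¹, e1]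
    group

lemma comm_pow_right' {K : Type*} [Group K] (a b : K)
    (hd : ∀ w : K, Commute ⁅⁅b, a⁆, b⁆ w) (n : ℕ) :
    ⁅a, b ^ n⁆ = ⁅a, b⁆ ^ n * ⁅⁅b, a⁆, b⁆ ^ n.choose 2 := by
  have h1 : ⁅a, b ^ n⁆ = (⁅b ^ n, a⁆)⁻¹ := (commutatorElement_inv _ _).symm
  rw [h1, comm_pow_left' b a hd n, mul_inv_rev, inv_pow, inv_inv, ← inv_pow,
    commutatorElement_inv]

lemma comm_inv_left' {K : Type*} [Group K] (g h : K)
    (hc : ∀ w : K, Commute ⁅g⁻¹, h⁆ w) : ⁅g⁻¹, h⁆ = ⁅g, h⁆⁻¹ := by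
  have h0 := comm_mul_left' g g⁻¹ h
  rw [mul_inv_cancel, commutatorElement_one_left] at h0
  have h1 : g * ⁅g⁻¹, h⁆ * g⁻¹ = ⁅g⁻¹, h⁆ := by
    rw [← (hc g).eq]; group
  rw [h1] at h0
  exact eq_inv_of_mul_eq_one_left h0.symm

lemma pcomm_eq_comm' {G : Type*} [Group G] (hc : ∀ g h w : G, Commute ⁅g, h⁆ w)
    (X Y : G) : pcomm X Y = ⁅X, Y⁆ := by
  have h1 : pcomm X Y = ⁅X⁻¹, Y⁻¹⁆ := by
    simp [pcomm, commutatorElement_def, mul_assoc]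
  have h2 : ⁅X⁻¹, Y⁻¹⁆ = ⁅X, Y⁻¹⁆⁻¹ := comm_inv_left' X Y⁻¹ (fun w => hc _ _ w)
  have h3 : ⁅Y⁻¹, X⁆ = ⁅Y, X⁆⁻¹ := comm_inv_left' Y X (fun w => hc _ _ w)
  have h4 : ⁅X, Y⁻¹⁆ = ⁅Y⁻¹, X⁆⁻¹ := (commutatorElement_inv _ _).symm
  rw [h1, h2, h4, h3, inv_inv, ← commutatorElement_inv, inv_inv]

/-- Let `G` be a nilpotent group of class two, minimally generated by `x₁, …, x_m`
with `orderOf (x i) = 2 ^ r i`, `1 ≤ r i`, `r` nondecreasing, `m > 1`, and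
`r_m = r_{m-1} + 1`.  If `G` is capable, then some commutator `[x_m, x_i]` with
`i ∈ {1, …, m-1}` has order exactly `2 ^ r_{m-1}`. -/
theorem capable_class_two_commutator_condition {G : Type u} [Group G] {m : ℕ}
    (x : Fin m → G) (r : Fin m → ℕ)
    (hgen : Subgroup.closure (Set.range x) = ⊤)
    (hmin : ∀ S : Set G, S ⊂ Set.range x → Subgroup.closure S ≠ ⊤)
    (hr : ∀ i, 1 ≤ r i) (hmono : Monotone r)
    (hord : ∀ i, orderOf (x i) = 2 ^ r i)
    (hclass2 : (⊤ : Subgroup G).lowerCentralSeries 2 = ⊥)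
    (hnonab : (⊤ : Subgroup G).lowerCentralSeries 1 ≠ ⊥)
    (hm : 1 < m)
    (hstep : r ⟨m - 1, by omega⟩ = r ⟨m - 2, by omega⟩ + 1)
    (hcap : IsCapable G) :
    ∃ i : Fin m, (i : ℕ) < m - 1 ∧
      orderOf (pcomm (x ⟨m - 1, by omega⟩) (x i)) = 2 ^ r ⟨m - 2, by omega⟩ := by
  by_contra hcon
  push_neg at hcon
  obtain ⟨K, instK, ⟨φ⟩⟩ := hcap
  -- the projection K → G with kernel the center
  set π : K →* G := φ.toMonoidHom.comp (QuotientGroup.mk' (Subgroup.center K)) with hπ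
  have hπsurj : Function.Surjective π :=
    φ.surjective.comp (QuotientGroup.mk'_surjective _)
  have hker : ∀ g : K, π g = 1 ↔ g ∈ Subgroup.center K := by
    intro g
    rw [hπ]
    simp only [MonoidHom.comp_apply, MulEquiv.coe_toMonoidHom]
    rw [EmbeddingLike.map_eq_one_iff]
    exact QuotientGroup.eq_one_iff g
  -- lifts of the generators
  have hy0 : ∀ i, ∃ k, π k = x i := fun i => hπsurj (x i)
  choose y hy using hy0
  -- triple commutators in G vanish
  have hG3 : ∀ g h k : G, ⁅⁅g, h⁆, k⁆ = 1 := by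
    intro g h k
    have h1 : ⁅g, h⁆ ∈ (⊤ : Subgroup G).lowerCentralSeries 1 := by
      rw [Subgroup.lowerCentralSeries_succ]
      exact Subgroup.subset_closure ⟨g, Subgroup.mem_top g, h, Subgroup.mem_top h, rfl⟩
    have h2 : ⁅⁅g, h⁆, k⁆ ∈ (⊤ : Subgroup G).lowerCentralSeries 2 := by
      rw [Subgroup.lowerCentralSeries_succ]
      exact Subgroup.subset_closure ⟨⁅g, h⁆, h1, k, Subgroup.mem_top k, rfl⟩
    rwa [hclass2, Subgroup.mem_bot] at h2
  have hGcen : ∀ g h w : G, Commute ⁅g, h⁆ w :=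
    fun g h w => commutatorElement_eq_one_iff_commute.mp (hG3 g h w)
  -- triple commutators in K are central
  have hK3 : ∀ g h k : K, ⁅⁅g, h⁆, k⁆ ∈ Subgroup.center K := by
    intro g h k
    rw [← hker]
    rw [map_commutatorElement, map_commutatorElement]
    exact hG3 _ _ _
  -- notation
  have hm1 : m - 1 < m := by omega
  have hm2 : m - 2 < m := by omega
  set M1 : Fin m := ⟨m - 1, hm1⟩ with hM1
  set M2 : Fin m := ⟨m - 2, hm2⟩ with hM2
  set e := r M2 with he
  set q := 2 ^ e with hq
  set hh := 2 ^ (e - 1) with hhh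
  have he1 : 1 ≤ e := hr M2
  have hq2 : q = 2 * hh := by
    rw [hq, hhh, ← pow_succ']
    congr 1
    omega
  set a := y M1 with ha
  set X := x M1 with hX
  -- main claim : a ^ q commutes with every generator lift
  have key : ∀ i : Fin m, Commute (a ^ q) (y i) := by
    intro i
    rcases lt_or_ge (i : ℕ) (m - 1) with hi | hi
    · -- the hard case
      set b := y i with hb
      set u := ⁅a, b⁆ with hu
      set c := ⁅u, a⁆ with hc
      set c' := ⁅u, b⁆ with hc'
      have hcC : ∀ w : K, Commute c w := center_commute' (hK3 a b a)
      have hc'C : ∀ w : K, Commute c' w := center_commute' (hK3 a b b)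
      have hdC : ∀ w : K, Commute ⁅⁅b, a⁆, b⁆ w := center_commute' (hK3 b a b)
      -- order of the commutator in G
      have hrle : r i ≤ e := by
        have hle : (i : ℕ) ≤ m - 2 := by omega
        exact hmono (by rw [hM2, Fin.le_def]; exact hle)
      have hgpow : ⁅X, x i⁆ ^ 2 ^ r i = 1 := by
        have h5 := comm_pow_right' X (x i)
          (fun w => hGcen _ _ w) (2 ^ r i)
        have hx1 : (x i) ^ 2 ^ r i = 1 := by
          rw [← hord i]; exact pow_orderOf_eq_one _
        rw [hx1, commutatorElement_one_right, hG3, one_pow, mul_one] at h5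
        exact h5.symm
      have hdvd : orderOf ⁅X, x i⁆ ∣ 2 ^ e :=
        dvd_trans (orderOf_dvd_of_pow_eq_one hgpow) (pow_dvd_pow 2 hrle)
      have hne : orderOf ⁅X, x i⁆ ≠ 2 ^ e := by
        have h7 := hcon i hi
        rwa [pcomm_eq_comm' hGcen] at h7
      have hdvd2 : orderOf ⁅X, x i⁆ ∣ hh := by
        obtain ⟨k, hk, hko⟩ := (Nat.dvd_prime_pow Nat.prime_two).mp hdvd
        have hklt : k ≤ e - 1 := by
          rcases Nat.lt_or_ge k e with h | h
          · omega
          · exfalso; exact hne (by rw [hko]; congr 1; omega)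
        rw [hko, hhh]
        exact pow_dvd_pow 2 hklt
      have hgh : ⁅X, x i⁆ ^ hh = 1 := orderOf_dvd_iff_pow_eq_one.mp hdvd2
      -- lift to K
      have hπu : π u = ⁅X, x i⁆ := by
        rw [hu, map_commutatorElement, ha, hy, hy]
      have ht : u ^ hh ∈ Subgroup.center K := by
        rw [← hker, map_pow, hπu, hgh]
      have htC : ∀ w : K, Commute (u ^ hh) w := center_commute' ht
      -- c ^ hh = 1
      have hcu1 : ⁅⁅u, a⁆, u⁆ = 1 := commutatorElement_eq_one_iff_commute.mpr (hcC u)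
      have hcb1 : ⁅⁅u, b⁆, u⁆ = 1 := commutatorElement_eq_one_iff_commute.mpr (hc'C u)
      have hch1 : c ^ hh = 1 := by
        have h8 := comm_pow_left' u a (fun w => by
          rw [hcu1]; exact Commute.one_left w) hh
        rw [hcu1, commutatorElement_eq_one_iff_commute.mpr (htC a)] at h8
        simpa using h8.symm
      have hch2 : c' ^ hh = 1 := by
        have h8 := comm_pow_left' u b (fun w => by
          rw [hcb1]; exact Commute.one_left w) hh
        rw [hcb1, commutatorElement_eq_one_iff_commute.mpr (htC b)] at h8
        simpa using h8.symm
      -- d := ⁅⁅b,a⁆,b⁆ satisfies d ^ hh = 1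
      have huinv : u⁻¹ = ⁅b, a⁆ := commutatorElement_inv a b
      have hdinv : ⁅⁅b, a⁆, b⁆ = c'⁻¹ := by
        rw [← huinv]
        have := comm_inv_left' u b (fun w => by rw [huinv]; exact hdC w)
        rw [this, hc']
      have hdh : ⁅⁅b, a⁆, b⁆ ^ hh = 1 := by
        rw [hdinv, inv_pow, hch2, inv_one]
      -- choose-2 arithmetic
      have hqch : q.choose 2 = hh * (q - 1) := by
        rw [Nat.choose_two_right, hq2, mul_assoc]
        exact Nat.mul_div_cancel_left _ (by norm_num)
      -- u ^ q = 1
      have hbq : b ^ q ∈ Subgroup.center K := by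
        rw [← hker, map_pow, hb, hy]
        have : q = 2 ^ r i * 2 ^ (e - r i) := by
          rw [hq, ← pow_add]
          congr 1
          omega
        rw [this, pow_mul, ← hord i, pow_orderOf_eq_one, one_pow]
      have habq : ⁅a, b ^ q⁆ = 1 :=
        commutatorElement_eq_one_iff_commute.mpr (center_commute' hbq a).symm
      have huq : u ^ q = 1 := by
        have h9 := comm_pow_right' a b hdC q
        rw [habq, hqch, pow_mul, hdh, one_pow, mul_one] at h9
        exact h9.symm
      -- conclude
      have hfin : ⁅a ^ q, b⁆ = 1 := by
        rw [comm_pow_left' a b hcC q, ← hu, ← hc, huq, hqch, mul_one,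
          inv_pow, pow_mul, hch1, one_pow, inv_one]
      exact commutatorElement_eq_one_iff_commute.mp hfin
    · -- i = M1
      have : i = M1 := by
        apply Fin.ext
        show (i : ℕ) = m - 1
        omega
      rw [this, ← ha]
      exact (Commute.refl a).pow_left q
  -- a ^ q is central
  have hcentral : a ^ q ∈ Subgroup.center K := by
    set SB : Set K := Set.range y ∪ (Subgroup.center K : Set K) with hSB
    have hcl : Subgroup.closure SB = ⊤ := by
      rw [eq_top_iff]
      intro k _
      have hk1 : π k ∈ Subgroup.closure (Set.range x) := by rw [hgen]; trivial
      have himg : Subgroup.closure (Set.range x) ≤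
          Subgroup.map π (Subgroup.closure (Set.range y)) := by
        rw [MonoidHom.map_closure]
        apply Subgroup.closure_mono
        rintro _ ⟨i, rfl⟩
        exact ⟨y i, ⟨i, rfl⟩, hy i⟩
      obtain ⟨w, hw_mem, hπw⟩ := himg hk1
      have hkw : k = (k * w⁻¹) * w := by group
      rw [hkw]
      apply Subgroup.mul_mem
      · apply Subgroup.subset_closure
        right
        have : π (k * w⁻¹) = 1 := by rw [map_mul, map_inv, hπw]; group
        exact (hker _).mp this
      · exact Subgroup.closure_mono Set.subset_union_left hw_mem
    rw [Subgroup.mem_center_iff]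
    intro g
    have hg : g ∈ Subgroup.closure SB := by rw [hcl]; trivial
    have : Commute (a ^ q) g := by
      induction hg using Subgroup.closure_induction with
      | mem s hs =>
        rcases hs with ⟨i, rfl⟩ | hs
        · exact key i
        · exact (center_commute' hs (a ^ q)).symm
      | one => exact Commute.one_right _
      | mul s t _ _ hs ht => exact hs.mul_right ht
      | inv s _ hs => exact hs.inv_right
    exact this.symm.eq
  -- contradiction with the order of x_m
  have hXq : X ^ q = 1 := by
    rw [hX, ← hy M1, ← map_pow]
    exact (hker _).mpr hcentral
  have hordX : orderOf X = 2 ^ (e + 1) := by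
    rw [hX, hord M1, hstep]
  have hdvdX : 2 ^ (e + 1) ∣ 2 ^ e := by
    rw [← hordX]
    exact orderOf_dvd_of_pow_eq_one hXq
  have := Nat.le_of_dvd (by positivity) hdvdX
  have h2e : (2 : ℕ) ^ e < 2 ^ (e + 1) := by
    exact Nat.pow_lt_pow_right (by norm_num) (by omega)
  omega
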